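/- Let G = (V, E) be a finite simple 2-edge-connected graph with |V| ≥ 3 and positive edge costs c, and let (G', c') be its inflated instance. If x' ∈ P_NC(G'), define x ∈ ℝ^E by x_e := x'_{e'}, where e' is the inter-clique edge of e, for each e ∈ E. Then x ∈ P_EC(G) and Σ_{e∈E} c_e x_e = Σ_{e'∈E'} c'_{e'} x'_{e'}. -/

import Mathlib

open scoped Classical
open Finset

namespace TwoNCTAP

variable {V : Type*}

/-- The graph `H` with the vertex `u` "deleted": all edges incident to `u` are removed,
so that `u` becomes an isolated vertex. -/
def delVert (H : SimpleGraph V) (u : V) : SimpleGraph V where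
  Adj a b := H.Adj a b ∧ a ≠ u ∧ b ≠ u
  symm := by constructor; rintro a b ⟨h, ha, hb⟩; exact ⟨h.symm, hb, ha⟩
  loopless := by constructor; rintro a ⟨h, -, -⟩; exact h.ne rfl

/-- The partition of `V ∖ {u}` into the vertex sets of the connected components
of `H − u`. -/
def compPartition (H : SimpleGraph V) (u : V) : Set (Set V) :=
  {S | ∃ v, v ≠ u ∧ S = {w | (delVert H u).Reachable v w}}

/-- `P` is a partition of the set `S`. -/
def IsPartitionOf (P : Set (Set V)) (S : Set V) : Prop :=
  (∀ B ∈ P, B.Nonempty) ∧ (∀ B ∈ P, B ⊆ S) ∧ ∀ v ∈ S, ∃! B : Set V, B ∈ P ∧ v ∈ B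

/-- An edge `e` crosses the partition `P` if its two endpoints lie in different blocks
of `P`. -/
def Crosses (P : Set (Set V)) (e : Sym2 V) : Prop :=
  ∃ v w, e = s(v, w) ∧ ∃ B ∈ P, ∃ C ∈ P, B ≠ C ∧ v ∈ B ∧ w ∈ C

/-- The edge `e` lies in the cut `δ(S)`: it has exactly one endpoint in `S`. -/
def inCut (S : Set V) (e : Sym2 V) : Prop :=
  ∃ a b, e = s(a, b) ∧ a ∈ S ∧ b ∉ S

/-- `G` is 2-edge-connected: it is connected and remains connected after deleting any
single edge. -/
def TwoEdgeConnected (G : SimpleGraph V) : Prop :=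
  G.Connected ∧ ∀ e ∈ G.edgeSet, (G.deleteEdges {e}).Connected

/-- The vertex set of the inflated instance: pairs `(v, e)` with `e ∈ E(G)` and
`v` an endpoint of `e`. -/
abbrev InflVert (G : SimpleGraph V) : Type _ :=
  {p : V × Sym2 V // p.2 ∈ G.edgeSet ∧ p.1 ∈ p.2}

/-- The inflated graph `G'`: `(v, e)` and `(w, f)` are adjacent iff they are distinct and
either `v = w` (a clique edge) or `e = f` (the inter-clique edge of `e`). -/
def Infl (G : SimpleGraph V) : SimpleGraph (InflVert G) where
  Adj a b := a ≠ b ∧ (a.val.1 = b.val.1 ∨ a.val.2 = b.val.2)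
  symm := by
    constructor
    rintro a b ⟨h1, h2 | h2⟩
    · exact ⟨h1.symm, Or.inl h2.symm⟩
    · exact ⟨h1.symm, Or.inr h2.symm⟩
  loopless := by constructor; rintro a ⟨h, -⟩; exact h rfl

/-- The graph `(V', F')` consisting of the clique edges only. -/
def cliqueGraph (G : SimpleGraph V) : SimpleGraph (InflVert G) where
  Adj a b := a ≠ b ∧ a.val.1 = b.val.1
  symm := by constructor; rintro a b ⟨h1, h2⟩; exact ⟨h1.symm, h2.symm⟩
  loopless := by constructor; rintro a ⟨h, -⟩; exact h rfl

variable [Fintype V]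

/-- The objective value `Σ_{e ∈ E(H)} c_e x_e` of `x` for costs `c` on the edges of `H`. -/
noncomputable def obj {W : Type*} [Fintype W] (H : SimpleGraph W) (c x : Sym2 W → ℝ) : ℝ :=
  ∑ e ∈ Finset.univ.filter (fun e : Sym2 W => e ∈ H.edgeSet), c e * x e

/-- The feasible region `P_EC(G)` of the cut LP relaxation of min-cost 2ECSS. -/
def PEC (G : SimpleGraph V) : Set (Sym2 V → ℝ) :=
  {x | (∀ e ∈ G.edgeSet, 0 ≤ x e ∧ x e ≤ 1) ∧
    ∀ S : Set V, S.Nonempty → S ≠ Set.univ →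
      (2 : ℝ) ≤ ∑ e ∈ Finset.univ.filter
          (fun e : Sym2 V => e ∈ G.edgeSet ∧ inCut S e), x e}

/-- The feasible region `P_NC(G')` of the partition LP relaxation of min-cost 2NCSS for
the inflated instance: `0 ≤ x ≤ 1`, the cut constraints, and for every `w ∈ V'` and every
partition `P` of `V' ∖ {w}` whose blocks are unions of vertex sets of connected
components of `(V', F') − w`, the partition constraint. -/
def PNC (G : SimpleGraph V) : Set (Sym2 (InflVert G) → ℝ) :=
  {x | (∀ f ∈ (Infl G).edgeSet, 0 ≤ x f ∧ x f ≤ 1) ∧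
    (∀ S : Set (InflVert G), S.Nonempty → S ≠ Set.univ →
      (2 : ℝ) ≤ ∑ f ∈ Finset.univ.filter
          (fun f : Sym2 (InflVert G) => f ∈ (Infl G).edgeSet ∧ inCut S f), x f) ∧
    ∀ (w : InflVert G) (P : Set (Set (InflVert G))),
      IsPartitionOf P {v | v ≠ w} →
      (∀ B ∈ compPartition (cliqueGraph G) w, ∃ C ∈ P, B ⊆ C) →
      (P.ncard : ℝ) - 1 ≤ ∑ f ∈ Finset.univ.filter
          (fun f : Sym2 (InflVert G) => f ∈ (Infl G).edgeSet ∧ Crosses P f), x f}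


/-- An edge of the inflated graph is *inter-clique* if its endpoints share their
second component. -/
def IC (G : SimpleGraph V) (f : Sym2 (InflVert G)) : Prop :=
  ∃ a b : InflVert G, f = s(a, b) ∧ a ≠ b ∧ a.val.2 = b.val.2

lemma ne_fst {G : SimpleGraph V} {a b : InflVert G} (hne : a ≠ b)
    (h2 : a.val.2 = b.val.2) : a.val.1 ≠ b.val.1 :=
  fun h => hne (Subtype.ext (Prod.ext h h2))

lemma snd_eq {G : SimpleGraph V} {a b : InflVert G} (hne : a ≠ b)
    (h2 : a.val.2 = b.val.2) : a.val.2 = s(a.val.1, b.val.1) := by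
  have h1 := ne_fst hne h2
  refine (Sym2.mem_and_mem_iff h1).mp ⟨a.prop.2, ?_⟩
  rw [h2]; exact b.prop.2

lemma inCut_mk {α : Type*} {S : Set α} {v w : α} :
    inCut S s(v, w) ↔ (v ∈ S ∧ w ∉ S) ∨ (w ∈ S ∧ v ∉ S) := by
  constructor
  · rintro ⟨a, b, heq, ha, hb⟩
    rcases Sym2.eq_iff.mp heq with ⟨rfl, rfl⟩ | ⟨rfl, rfl⟩
    · exact Or.inl ⟨ha, hb⟩
    · exact Or.inr ⟨ha, hb⟩
  · rintro (⟨h1, h2⟩ | ⟨h1, h2⟩)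
    · exact ⟨v, w, rfl, h1, h2⟩
    · exact ⟨w, v, Sym2.eq_swap.symm, h1, h2⟩

lemma exists_adj {G : SimpleGraph V} [Fintype V] (hconn : G.Connected)
    (h : 1 < Fintype.card V) (v : V) : ∃ w, G.Adj v w := by
  obtain ⟨u, hu⟩ := Fintype.exists_ne_of_one_lt_card h v
  obtain ⟨p⟩ := hconn.preconnected v u
  cases p with
  | nil => exact absurd rfl hu
  | cons h _ => exact ⟨_, h⟩

/-- The key sum bijection between inter-clique edges of `G'` and edges of `G`. -/
lemma sum_IC (G : SimpleGraph V) [Fintype V]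
    (F : Sym2 V → ℝ) (F' : Sym2 (InflVert G) → ℝ)
    (p : Sym2 V → Prop) (p' : Sym2 (InflVert G) → Prop)
    (hF : ∀ a b : InflVert G, a ≠ b → a.val.2 = b.val.2 → F' s(a, b) = F a.val.2)
    (hp : ∀ a b : InflVert G, a ≠ b → a.val.2 = b.val.2 → (p' s(a, b) ↔ p a.val.2)) :
    ∑ f ∈ Finset.univ.filter
        (fun f : Sym2 (InflVert G) => f ∈ (Infl G).edgeSet ∧ p' f ∧ IC G f), F' f
      = ∑ e ∈ Finset.univ.filter (fun e : Sym2 V => e ∈ G.edgeSet ∧ p e), F e := by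
  apply Finset.sum_bij (fun f _ => Sym2.map (fun q : InflVert G => q.val.1) f)
  · intro f hf
    simp only [Finset.mem_filter, Finset.mem_univ, true_and] at hf ⊢
    obtain ⟨hedge, hpf, a, b, rfl, hne, h2⟩ := hf
    rw [Sym2.map_pair_eq, ← snd_eq hne h2]
    exact ⟨a.prop.1, (hp a b hne h2).mp hpf⟩
  · intro f1 h1 f2 h2 heq
    simp only [Finset.mem_filter, Finset.mem_univ, true_and] at h1 h2
    obtain ⟨-, -, a, b, rfl, hab, hab2⟩ := h1
    obtain ⟨-, -, c, d, rfl, hcd, hcd2⟩ := h2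
    rw [Sym2.map_pair_eq, Sym2.map_pair_eq] at heq
    have hsnd : a.val.2 = c.val.2 := by
      rw [snd_eq hab hab2, snd_eq hcd hcd2, heq]
    rcases Sym2.eq_iff.mp heq with ⟨e1, e2⟩ | ⟨e1, e2⟩
    · have hac : a = c := Subtype.ext (Prod.ext e1 hsnd)
      have hbd : b = d := Subtype.ext (Prod.ext e2 (by rw [← hab2, hsnd, hcd2]))
      rw [hac, hbd]
    · have had : a = d := Subtype.ext (Prod.ext e1 (by rw [hsnd, hcd2]))
      have hbc : b = c := Subtype.ext (Prod.ext e2 (by rw [← hab2, hsnd]))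
      rw [had, hbc, Sym2.eq_swap]
  · intro e he
    simp only [Finset.mem_filter, Finset.mem_univ, true_and] at he
    induction e using Sym2.ind with
    | _ v w =>
      obtain ⟨hedge, hpe⟩ := he
      have hadj : G.Adj v w := hedge
      set a : InflVert G := ⟨(v, s(v, w)), hedge, Sym2.mem_mk_left _ _⟩ with ha
      set b : InflVert G := ⟨(w, s(v, w)), hedge, Sym2.mem_mk_right _ _⟩ with hb
      have hne : a ≠ b := fun h => (G.ne_of_adj hadj) (congrArg (fun q => q.val.1) h)
      refine ⟨s(a, b), ?_, ?_⟩
      · simp only [Finset.mem_filter, Finset.mem_univ, true_and]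
        refine ⟨⟨hne, Or.inr rfl⟩, (hp a b hne rfl).mpr hpe, a, b, rfl, hne, rfl⟩
      · rw [Sym2.map_pair_eq]
  · intro f hf
    simp only [Finset.mem_filter, Finset.mem_univ, true_and] at hf
    obtain ⟨-, -, a, b, rfl, hne, h2⟩ := hf
    rw [Sym2.map_pair_eq, ← snd_eq hne h2]
    exact hF a b hne h2

lemma IC_of_cut {G : SimpleGraph V} {S : Set V} {f : Sym2 (InflVert G)}
    (hedge : f ∈ (Infl G).edgeSet)
    (hcut : inCut {q : InflVert G | q.val.1 ∈ S} f) : IC G f := by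
  induction f using Sym2.ind with
  | _ a b =>
    obtain ⟨hne, hor⟩ : (Infl G).Adj a b := hedge
    rcases inCut_mk.mp hcut with ⟨h1, h2⟩ | ⟨h1, h2⟩ <;>
      rcases hor with h | h
    · exact absurd (show b ∈ {q : InflVert G | q.val.1 ∈ S} by
        simp only [Set.mem_setOf_eq, ← h]; exact h1) h2
    · exact ⟨a, b, rfl, hne, h⟩
    · exact absurd (show a ∈ {q : InflVert G | q.val.1 ∈ S} by
        simp only [Set.mem_setOf_eq, h]; exact h1) h2
    · exact ⟨a, b, rfl, hne, h⟩

/-- Let `G` be 2-edge-connected with positive edge costs `c`, and let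
`(G', c')` be its inflated instance. If `x' ∈ P_NC(G')` and `x` is obtained from `x'` by
putting `x_e := x'_{e'}` for the inter-clique edge `e'` of each `e ∈ E`, then
`x ∈ P_EC(G)` and the two objective values agree. -/
theorem inflation_NC_to_EC
    (G : SimpleGraph V) (hV : 3 ≤ Fintype.card V) (h2ec : TwoEdgeConnected G)
    (c : Sym2 V → ℝ) (hc : ∀ e ∈ G.edgeSet, 0 < c e)
    (c' : Sym2 (InflVert G) → ℝ)
    (hc'cl : ∀ a b : InflVert G, a ≠ b → a.val.1 = b.val.1 → c' s(a, b) = 0)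
    (hc'in : ∀ a b : InflVert G, a ≠ b → a.val.2 = b.val.2 → c' s(a, b) = c a.val.2)
    (x' : Sym2 (InflVert G) → ℝ) (hx' : x' ∈ PNC G)
    (x : Sym2 V → ℝ)
    (hxdef : ∀ a b : InflVert G, a ≠ b → a.val.2 = b.val.2 → x a.val.2 = x' s(a, b)) :
    x ∈ PEC G ∧ obj G c x = obj (Infl G) c' x' := by
  obtain ⟨hbnd, hcutNC, -⟩ := hx'
  have hcard : 1 < Fintype.card V := by omega
  -- a helper producing the inter-clique vertex pair above an edge
  have hmk : ∀ v w : V, G.Adj v w → ∃ a b : InflVert G,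
      a ≠ b ∧ a.val.2 = b.val.2 ∧ a.val = (v, s(v, w)) ∧ b.val = (w, s(v, w)) := by
    intro v w hadj
    refine ⟨⟨(v, s(v, w)), hadj, Sym2.mem_mk_left _ _⟩,
      ⟨(w, s(v, w)), hadj, Sym2.mem_mk_right _ _⟩, ?_, rfl, rfl, rfl⟩
    exact fun h => (G.ne_of_adj hadj) (congrArg (fun q => q.val.1) h)
  constructor
  · constructor
    · -- bounds
      intro e he
      induction e using Sym2.ind with
      | _ v w =>
        have hadj : G.Adj v w := he
        obtain ⟨a, b, hne, h2, hav, hbv⟩ := hmk v w hadj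
        have hx : x s(v, w) = x' s(a, b) := by
          have := hxdef a b hne h2
          rwa [hav] at this
        rw [hx]
        exact hbnd s(a, b) ⟨hne, Or.inr (by rw [hav, hbv])⟩
    · -- cut constraints
      intro S hS hSu
      set S' : Set (InflVert G) := {q : InflVert G | q.val.1 ∈ S} with hS'
      have hS'ne : S'.Nonempty := by
        obtain ⟨v, hv⟩ := hS
        obtain ⟨w, hadj⟩ := exists_adj h2ec.1 hcard v
        obtain ⟨a, -, -, -, hav, -⟩ := hmk v w hadj
        exact ⟨a, by simp [hS', Set.mem_setOf_eq, hav, hv]⟩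
      have hS'u : S' ≠ Set.univ := by
        obtain ⟨u, hu⟩ := (Set.ne_univ_iff_exists_notMem _).mp hSu
        obtain ⟨w, hadj⟩ := exists_adj h2ec.1 hcard u
        obtain ⟨a, -, -, -, hav, -⟩ := hmk u w hadj
        refine (Set.ne_univ_iff_exists_notMem _).mpr ⟨a, ?_⟩
        simp [hS', Set.mem_setOf_eq, hav, hu]
      have h2 := hcutNC S' hS'ne hS'u
      have hfe : Finset.univ.filter
            (fun f : Sym2 (InflVert G) => f ∈ (Infl G).edgeSet ∧ inCut S' f)
          = Finset.univ.filter (fun f : Sym2 (InflVert G) =>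
            f ∈ (Infl G).edgeSet ∧ inCut S' f ∧ IC G f) := by
        apply Finset.filter_congr
        intro f _
        constructor
        · rintro ⟨h1, h3⟩; exact ⟨h1, h3, IC_of_cut h1 h3⟩
        · rintro ⟨h1, h3, -⟩; exact ⟨h1, h3⟩
      rw [hfe] at h2
      rw [sum_IC G x x' (inCut S) (inCut S')
        (fun a b hne hab => (hxdef a b hne hab).symm) ?_] at h2
      · exact h2
      · intro a b hne hab
        rw [snd_eq hne hab, inCut_mk, inCut_mk]
        constructor
        · rintro (⟨h1, h3⟩ | ⟨h1, h3⟩)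
          · exact Or.inl ⟨h1, h3⟩
          · exact Or.inr ⟨h1, h3⟩
        · rintro (⟨h1, h3⟩ | ⟨h1, h3⟩)
          · exact Or.inl ⟨h1, h3⟩
          · exact Or.inr ⟨h1, h3⟩
  · -- objective values agree
    unfold obj
    have hbij := sum_IC G (fun e => c e * x e) (fun f => c' f * x' f)
      (fun _ => True) (fun _ => True)
      (fun a b hne hab => by
        show c' s(a, b) * x' s(a, b) = c a.val.2 * x a.val.2
        rw [hc'in a b hne hab, hxdef a b hne hab])
      (fun _ _ _ _ => Iff.rfl)
    simp only [and_true, true_and] at hbij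
    rw [← hbij]
    apply Finset.sum_subset
    · intro f hf
      simp only [Finset.mem_filter, Finset.mem_univ, true_and] at hf ⊢
      exact hf.1
    · intro f hf hnf
      simp only [Finset.mem_filter, Finset.mem_univ, true_and] at hf hnf
      have hnIC : ¬ IC G f := fun h => hnf ⟨hf, h⟩
      induction f using Sym2.ind with
      | _ a b =>
        obtain ⟨hne, hor⟩ : (Infl G).Adj a b := hf
        rcases hor with h | h
        · rw [hc'cl a b hne h, zero_mul]
        · exact absurd ⟨a, b, rfl, hne, h⟩ hnIC

end TwoNCTAP
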